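/- arXiv:2105.11568 — 2 statements merged into one kernel-verified Lean document; each statement's English description precedes it below -/
import Mathlib

section
/- Let γ = ρ_k ∘ ... ∘ ρ_1 be the Coxeter element acting on weakly increasing k-tuples with entries in {0,...,n−1} (with conventions x₀ = 0, x_{k+1} = n−1). Then γ^{k+1} = id. -/
/-- The reflection `ρ_i` acting on extended tuples `(x₀, x₁, ..., x_k, x_{k+1})`. -/
def rho (k : ℕ) (i : Fin k) (x : Fin (k + 2) → ℝ) : Fin (k + 2) → ℝ :=
  fun j =>
    if j.val = i.val + 1 then
      x ⟨i.val, by omega⟩ + x ⟨i.val + 2, by omega⟩ - x ⟨i.val + 1, by omega⟩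
    else x j

/-- `gammaAux k m = ρ_m ∘ ⋯ ∘ ρ_2 ∘ ρ_1` (1-based numbering; `ρ_1` acts first). -/
def gammaAux (k : ℕ) : ℕ → (Fin (k + 2) → ℝ) → Fin (k + 2) → ℝ
  | 0 => id
  | m + 1 => if h : m < k then rho k ⟨m, h⟩ ∘ gammaAux k m else gammaAux k m

/-- The Coxeter element `γ = ρ_k ∘ ⋯ ∘ ρ_1`. -/
def gammaMap (k : ℕ) : (Fin (k + 2) → ℝ) → Fin (k + 2) → ℝ := gammaAux k k

/-- Membership in `X`: weakly increasing tuples with `x₀ = 0`, `x_{k+1} = n - 1`. -/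
def inX (n k : ℕ) (x : Fin (k + 2) → ℝ) : Prop :=
  Monotone x ∧ x 0 = 0 ∧ x (Fin.last (k + 1)) = (n : ℝ) - 1

/-- ℕ-indexed view of a tuple. -/
def XX (k : ℕ) (x : Fin (k + 2) → ℝ) (t : ℕ) : ℝ :=
  if h : t < k + 2 then x ⟨t, h⟩ else 0

lemma XX_eq (k : ℕ) (x : Fin (k + 2) → ℝ) (t : ℕ) (ht : t < k + 2) :
    XX k x t = x ⟨t, ht⟩ := dif_pos ht

lemma gammaAux_apply (k : ℕ) (x : Fin (k+2) → ℝ) (m : ℕ) (hm : m ≤ k) :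
    ∀ (j : ℕ) (hj : j < k+2), gammaAux k m x ⟨j, hj⟩ =
      if h : 1 ≤ j ∧ j ≤ m then
        x ⟨0, by omega⟩ + x ⟨j+1, by omega⟩ - x ⟨1, by omega⟩
      else x ⟨j, hj⟩ := by
  induction m with
  | zero =>
    intro j hj
    rw [dif_neg (by omega)]
    rfl
  | succ m ih =>
    intro j hj
    have hmk : m < k := hm
    have ih' := ih (by omega)
    simp only [gammaAux, dif_pos hmk, Function.comp_apply, rho]
    by_cases hje : j = m + 1
    · subst hje
      rw [if_pos rfl, ih' m (by omega), ih' (m+2) (by omega), ih' (m+1) (by omega),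
        dif_pos (show 1 ≤ m+1 ∧ m+1 ≤ m+1 by omega),
        dif_neg (show ¬(1 ≤ m+2 ∧ m+2 ≤ m) by omega),
        dif_neg (show ¬(1 ≤ m+1 ∧ m+1 ≤ m) by omega)]
      by_cases hm0 : m = 0
      · subst hm0
        rw [dif_neg (by omega)]
      · rw [dif_pos (show 1 ≤ m ∧ m ≤ m by omega)]
        ring_nf
    · rw [if_neg (by simpa using hje), ih' j hj]
      by_cases hc : 1 ≤ j ∧ j ≤ m
      · rw [dif_pos hc, dif_pos (show 1 ≤ j ∧ j ≤ m+1 by omega)]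
      · rw [dif_neg hc, dif_neg (by omega)]

lemma gammaMap_XX (k : ℕ) (x : Fin (k+2) → ℝ) (t : ℕ) (ht : t ≤ k + 1) :
    XX k (gammaMap k x) t =
      if 1 ≤ t ∧ t ≤ k then XX k x 0 + XX k x (t+1) - XX k x 1 else XX k x t := by
  rw [XX_eq k _ t (by omega), gammaMap, gammaAux_apply k x k le_rfl t (by omega)]
  by_cases hc : 1 ≤ t ∧ t ≤ k
  · rw [dif_pos hc, if_pos hc, XX_eq k x 0 (by omega), XX_eq k x (t+1) (by omega),
      XX_eq k x 1 (by omega)]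
  · rw [dif_neg hc, if_neg hc, XX_eq k x t (by omega)]

lemma iter_XX (k : ℕ) (x : Fin (k+2) → ℝ) (m : ℕ) (hm : m ≤ k + 1) :
    ∀ t ≤ k + 1, XX k ((gammaMap k)^[m] x) t =
      if t = 0 then XX k x 0
      else if t + m ≤ k + 1 then XX k x 0 + XX k x (t+m) - XX k x m
      else XX k x (k+1) + XX k x (t+m-(k+1)) - XX k x m := by
  induction m with
  | zero =>
    intro t ht
    rw [Function.iterate_zero, id_eq]
    by_cases h0 : t = 0
    · rw [if_pos h0, h0]
    · rw [if_neg h0, if_pos (by omega)]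
      ring_nf
  | succ m ih =>
    intro t ht
    have hm' : m ≤ k + 1 := by omega
    have ih' := ih hm'
    rw [Function.iterate_succ_apply', gammaMap_XX k _ t ht]
    by_cases h0 : t = 0
    · subst h0
      rw [if_neg (by omega), ih' 0 (by omega), if_pos rfl, if_pos rfl]
    · rw [if_neg h0]
      by_cases hc : 1 ≤ t ∧ t ≤ k
      · rw [if_pos hc, ih' 0 (by omega), if_pos rfl,
          ih' 1 (by omega), if_neg (by omega), if_pos (by omega),
          ih' (t+1) (by omega), if_neg (by omega)]
        by_cases h2 : t + 1 + m ≤ k + 1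
        · rw [if_pos h2, if_pos (by omega),
            show t + 1 + m = t + (m + 1) by omega, show 1 + m = m + 1 by omega]
          ring
        · rw [if_neg h2, if_neg (by omega),
            show t + 1 + m - (k+1) = t + (m + 1) - (k+1) by omega,
            show 1 + m = m + 1 by omega]
          ring
      · -- here t = k + 1
        have htk : t = k + 1 := by omega
        subst htk
        rw [if_neg hc, ih' (k+1) (by omega)]
        simp only [if_neg (show ¬(k+1 = 0) by omega)]
        rw [if_neg (show ¬(k+1+(m+1) ≤ k+1) by omega),
          show k+1+(m+1)-(k+1) = m+1 by omega]
        by_cases hm0 : m = 0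
        · subst hm0
          rw [if_pos (show k+1+0 ≤ k+1 by omega), show k+1+0 = k+1 by omega]
          ring
        · rw [if_neg (show ¬(k+1+m ≤ k+1) by omega),
            show k+1+m-(k+1) = m by omega]
          ring

theorem stmt_10 (n k : ℕ) (hn : 2 ≤ n) (hk : 2 ≤ k)
    (x : Fin (k + 2) → ℝ) (hx : inX n k x) :
    (gammaMap k)^[k + 1] x = x := by
  funext j
  obtain ⟨jv, hj⟩ := j
  have h := iter_XX k x (k+1) le_rfl jv (by omega)
  rw [XX_eq k _ jv hj] at h
  rw [h]
  by_cases h0 : jv = 0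
  · subst h0
    rw [if_pos rfl, XX_eq k x 0 hj]
  · rw [if_neg h0, if_neg (by omega), show jv + (k+1) - (k+1) = jv by omega,
      XX_eq k x (k+1) (by omega), XX_eq k x jv hj]
    ring
end

section
/- Let X be the set of k-element multisets with elements in ℤ/n (n ≥ 2), and let T : X → X increment each element by 1 mod n. Let g_i(x) denote the i-th smallest element of x (taking representatives in {0,...,n−1}). Then for all i, j with i + j = k + 1, the function g_i + g_j is (n−1)-mesic: for every x ∈ X, (1/n) Σ_{m=0}^{n-1} (g_i(T^m x) + g_j(T^m x)) = n − 1. -/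
/-- Rotation: increment every element of the multiset by 1 mod n. -/
def Tmap (n : ℕ) [NeZero n] (x : Multiset (Fin n)) : Multiset (Fin n) :=
  x.map (· + 1)

/-- `gstat n i x` is the `i`-th smallest element of `x` (1-based), as a real number. -/
def gstat (n : ℕ) [NeZero n] (i : ℕ) (x : Multiset (Fin n)) : ℝ :=
  ((((x.sort (· ≤ ·)).getD (i - 1) 0 : Fin n) : ℕ) : ℝ)

open Fin.NatCast

/-- The `i`-th smallest element equals the number of `c ∈ [0, n-2]` such that fewer than `i`
elements of the multiset are `≤ c`. -/
lemma gstat_eq_card (n : ℕ) [NeZero n] (k i : ℕ) (hi1 : 1 ≤ i) (hik : i ≤ k)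
    (y : Multiset (Fin n)) (hy : Multiset.card y = k) :
    gstat n i y = (((Finset.range (n - 1)).filter
      (fun c => Multiset.countP (fun (a : Fin n) => (a : ℕ) ≤ c) y < i)).card : ℝ) := by
  classical
  set l := y.sort (· ≤ ·) with hl
  have hlen : l.length = k := by rw [hl, Multiset.length_sort, hy]
  have hidx : i - 1 < l.length := by omega
  have hsorted : l.Pairwise (· ≤ ·) := Multiset.pairwise_sort _ _
  rw [List.pairwise_iff_getElem] at hsorted
  have hmono : ∀ (s t : ℕ) (hs : s < l.length) (ht : t < l.length), s ≤ t →
      (l[s] : ℕ) ≤ (l[t] : ℕ) := by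
    intro s t hs ht hst
    rcases eq_or_lt_of_le hst with rfl | h
    · exact le_refl _
    · exact hsorted s t hs ht h
  set v : ℕ := (l[i-1]'hidx : ℕ) with hv
  have hvn : v < n := (l[i-1]'hidx).isLt
  have hcount : ∀ c : ℕ, (Multiset.countP (fun (a : Fin n) => (a : ℕ) ≤ c) y < i ↔ c < v) := by
    intro c
    have hycoe : (l : Multiset (Fin n)) = y := Multiset.sort_eq _ _
    have hcnt : Multiset.countP (fun (a : Fin n) => (a : ℕ) ≤ c) y
        = l.countP (fun (a : Fin n) => decide ((a : ℕ) ≤ c)) := by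
      rw [← hycoe, Multiset.coe_countP]
    rw [hcnt]
    constructor
    · -- countP < i → c < v
      intro h
      by_contra hcv
      push_neg at hcv  -- v ≤ c
      -- first i elements all satisfy the predicate
      have htake : (l.take i).countP (fun (a : Fin n) => decide ((a : ℕ) ≤ c)) = i := by
        have hlt : (l.take i).length = i := by
          rw [List.length_take]; omega
        rw [List.countP_eq_length.2, hlt]
        intro a ha
        rw [List.mem_take_iff_getElem] at ha
        obtain ⟨t, ht, rfl⟩ := ha
        have ht' : t < l.length := by omega
        have := hmono t (i-1) ht' hidx (by omega)
        simpa using le_trans this hcv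
      have := List.countP_append (p := fun (a : Fin n) => decide ((a : ℕ) ≤ c)) (l₁ := l.take i) (l₂ := l.drop i)
      rw [List.take_append_drop] at this
      omega
    · -- c < v → countP < i
      intro hcv
      have hsplit := List.countP_append (p := fun (a : Fin n) => decide ((a : ℕ) ≤ c)) (l₁ := l.take (i-1)) (l₂ := l.drop (i-1))
      rw [List.take_append_drop] at hsplit
      have hdrop : (l.drop (i-1)).countP (fun (a : Fin n) => decide ((a : ℕ) ≤ c)) = 0 := by
        rw [List.countP_eq_zero]
        intro a ha
        rw [List.mem_iff_getElem] at ha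
        obtain ⟨t, ht, rfl⟩ := ha
        rw [List.getElem_drop]
        have htl : i - 1 + t < l.length := by
          rw [List.length_drop] at ht; omega
        have := hmono (i-1) (i-1+t) hidx htl (by omega)
        simp only [decide_eq_true_eq]
        omega
      have htk : (l.take (i-1)).countP (fun (a : Fin n) => decide ((a : ℕ) ≤ c)) ≤ i - 1 := by
        calc (l.take (i-1)).countP (fun (a : Fin n) => decide ((a : ℕ) ≤ c))
            ≤ (l.take (i-1)).length := List.countP_le_length
          _ ≤ i - 1 := by rw [List.length_take]; omega
      omega
  have hfilter : (Finset.range (n - 1)).filter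
      (fun c => Multiset.countP (fun (a : Fin n) => (a : ℕ) ≤ c) y < i) = Finset.range v := by
    ext c
    simp only [Finset.mem_filter, Finset.mem_range, hcount]
    omega
  rw [hfilter, Finset.card_range]
  unfold gstat
  rw [← hl, List.getD_eq_getElem _ _ hidx]

/-- Pure arithmetic form of the flip. -/
lemma nat_flip (n b c : ℕ) (hn : 2 ≤ n) (hb : b < n) (hc : c < n - 1) :
    (b + (n - 1 - c)) % n ≤ n - 2 - c ↔ ¬ (b ≤ c) := by
  rcases le_or_gt b c with hle | hgt
  · rw [Nat.mod_eq_of_lt (by omega)]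
    omega
  · rw [Nat.mod_eq_sub_mod (by omega), Nat.mod_eq_of_lt (by omega)]
    omega

/-- The key counting identity: shifting by `n-1-c` and replacing `c` by `n-2-c`
turns the count of elements `≤ c` into `k` minus it. -/
lemma count_flip (n : ℕ) [NeZero n] (k : ℕ) (hn : 2 ≤ n)
    (x : Multiset (Fin n)) (hx : Multiset.card x = k)
    (m : Fin n) (c : ℕ) (hc : c < n - 1) :
    Multiset.countP (fun a => ((a + (m + ((n - 1 - c : ℕ) : Fin n)) : Fin n) : ℕ) ≤ n - 2 - c) x
      = k - Multiset.countP (fun a => ((a + m : Fin n) : ℕ) ≤ c) x := by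
  classical
  have hpt : ∀ a : Fin n,
      (((a + (m + ((n - 1 - c : ℕ) : Fin n)) : Fin n) : ℕ) ≤ n - 2 - c)
        ↔ ¬ (((a + m : Fin n) : ℕ) ≤ c) := by
    intro a
    have hd : (((n - 1 - c : ℕ) : Fin n) : ℕ) = n - 1 - c := by
      rw [Fin.val_natCast, Nat.mod_eq_of_lt (by omega)]
    set b : Fin n := a + m with hb
    have hrw : a + (m + ((n - 1 - c : ℕ) : Fin n)) = b + ((n - 1 - c : ℕ) : Fin n) := by
      rw [hb, add_assoc]
    rw [hrw]
    have hval : ((b + ((n - 1 - c : ℕ) : Fin n) : Fin n) : ℕ) = ((b : ℕ) + (n - 1 - c)) % n := by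
      rw [Fin.val_add, hd]
    rw [hval]
    exact nat_flip n (b : ℕ) c hn b.isLt hc
  have hcongr : Multiset.countP
      (fun a => ((a + (m + ((n - 1 - c : ℕ) : Fin n)) : Fin n) : ℕ) ≤ n - 2 - c) x
      = Multiset.countP (fun a => ¬ (((a + m : Fin n) : ℕ) ≤ c)) x := by
    apply Multiset.countP_congr rfl
    intro a _
    exact propext (hpt a)
  rw [hcongr]
  have := Multiset.card_eq_countP_add_countP (fun a => ((a + m : Fin n) : ℕ) ≤ c) x
  rw [hx] at this
  omega

theorem stmt_12 (n k : ℕ) [NeZero n] (hn : 2 ≤ n) (hk : 2 ≤ k)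
    (x : Multiset (Fin n)) (hx : Multiset.card x = k)
    (i j : ℕ) (hi1 : 1 ≤ i) (hik : i ≤ k) (hj1 : 1 ≤ j) (hjk : j ≤ k)
    (hij : i + j = k + 1) :
    (1 / (n : ℝ)) *
        ∑ m ∈ Finset.range n,
          (gstat n i ((Tmap n)^[m] x) + gstat n j ((Tmap n)^[m] x)) =
      (n : ℝ) - 1 := by
  classical
  have hn0 : (n : ℝ) ≠ 0 := Nat.cast_ne_zero.mpr (NeZero.ne n)
  -- iterate formula
  have hiter : ∀ m : ℕ, (Tmap n)^[m] x = x.map (fun a => a + (m : Fin n)) := by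
    intro m
    induction m with
    | zero => simp
    | succ m ih =>
      rw [Function.iterate_succ_apply', ih]
      unfold Tmap
      rw [Multiset.map_map]
      congr 1
      funext a
      show a + (m : Fin n) + 1 = a + ((m + 1 : ℕ) : Fin n)
      push_cast
      rw [add_assoc]
  -- the count function
  set F : Fin n → ℕ → ℕ := fun m c => Multiset.countP (fun a => ((a + m : Fin n) : ℕ) ≤ c) x
    with hF
  -- gstat in terms of F
  have hg : ∀ (m : Fin n) (i' : ℕ), 1 ≤ i' → i' ≤ k →
      gstat n i' (x.map (fun a => a + m)) =
        (((Finset.range (n - 1)).filter (fun c => F m c < i')).card : ℝ) := by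
    intro m i' h1 h2
    rw [gstat_eq_card n k i' h1 h2 _ (by rw [Multiset.card_map, hx])]
    have hcnt : ∀ c, Multiset.countP (fun (a : Fin n) => (a : ℕ) ≤ c) (x.map (fun a => a + m))
        = F m c := by
      intro c
      rw [Multiset.countP_map, ← Multiset.countP_eq_card_filter]
    simp only [hcnt]
  -- convert sum over range n to sum over Fin n
  have hsum1 : ∑ m ∈ Finset.range n,
      (gstat n i ((Tmap n)^[m] x) + gstat n j ((Tmap n)^[m] x))
      = ∑ m : Fin n, ((((Finset.range (n - 1)).filter (fun c => F m c < i)).card : ℝ)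
          + (((Finset.range (n - 1)).filter (fun c => F m c < j)).card : ℝ)) := by
    rw [← Fin.sum_univ_eq_sum_range (fun m => gstat n i ((Tmap n)^[m] x)
      + gstat n j ((Tmap n)^[m] x)) n]
    apply Finset.sum_congr rfl
    intro m _
    rw [hiter, Fin.cast_val_eq_self, hg m i hi1 hik, hg m j hj1 hjk]
  -- the key natural number identity
  have hkey : ∑ m : Fin n, ((((Finset.range (n - 1)).filter (fun c => F m c < i)).card)
      + (((Finset.range (n - 1)).filter (fun c => F m c < j)).card)) = n * (n - 1) := by
    have hA : ∀ i' : ℕ, ∑ m : Fin n, ((Finset.range (n - 1)).filter (fun c => F m c < i')).card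
        = ∑ p ∈ Finset.univ ×ˢ Finset.range (n - 1),
            (if F p.1 p.2 < i' then 1 else 0) := by
      intro i'
      rw [Finset.sum_product (s := Finset.univ) (t := Finset.range (n - 1))
        (f := fun p => if F p.1 p.2 < i' then (1:ℕ) else 0)]
      apply Finset.sum_congr rfl
      intro m _
      rw [Finset.card_filter]
    rw [Finset.sum_add_distrib, hA i, hA j]
    -- reindex the i-sum by the involution
    have hbij : ∑ p ∈ Finset.univ ×ˢ Finset.range (n - 1),
        (if j ≤ F p.1 p.2 then 1 else 0)
        = ∑ p ∈ Finset.univ ×ˢ Finset.range (n - 1), (if F p.1 p.2 < i then 1 else 0) := by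
      apply Finset.sum_nbij'
        (i := fun p => (p.1 + ((n - 1 - p.2 : ℕ) : Fin n), n - 2 - p.2))
        (j := fun p => (p.1 + ((n - 1 - p.2 : ℕ) : Fin n), n - 2 - p.2))
      · intro p hp
        simp only [Finset.mem_product, Finset.mem_univ, Finset.mem_range, true_and] at hp ⊢
        omega
      · intro p hp
        simp only [Finset.mem_product, Finset.mem_univ, Finset.mem_range, true_and] at hp ⊢
        omega
      · intro p hp
        obtain ⟨mm, c⟩ := p
        simp only [Finset.mem_product, Finset.mem_univ, Finset.mem_range, true_and] at hp
        have h2 : n - 2 - (n - 2 - c) = c := by omega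
        have h1 : n - 1 - (n - 2 - c) = c + 1 := by omega
        rw [Prod.mk.injEq]
        constructor
        · rw [h1, add_assoc, ← Nat.cast_add]
          have h3 : n - 1 - c + (c + 1) = n := by omega
          rw [h3, Fin.natCast_self, add_zero]
        · exact h2
      · intro p hp
        obtain ⟨mm, c⟩ := p
        simp only [Finset.mem_product, Finset.mem_univ, Finset.mem_range, true_and] at hp
        have h2 : n - 2 - (n - 2 - c) = c := by omega
        have h1 : n - 1 - (n - 2 - c) = c + 1 := by omega
        rw [Prod.mk.injEq]
        constructor
        · rw [h1, add_assoc, ← Nat.cast_add]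
          have h3 : n - 1 - c + (c + 1) = n := by omega
          rw [h3, Fin.natCast_self, add_zero]
        · exact h2
      · intro p hp
        simp only [Finset.mem_product, Finset.mem_univ, Finset.mem_range, true_and] at hp
        have hflip := count_flip n k hn x hx p.1 p.2 hp
        have hFle : F p.1 p.2 ≤ k := by
          rw [hF]
          calc Multiset.countP _ x ≤ Multiset.card x := Multiset.countP_le_card _ x
            _ = k := hx
        show (if j ≤ F p.1 p.2 then 1 else 0)
          = (if F (p.1 + ((n - 1 - p.2 : ℕ) : Fin n)) (n - 2 - p.2) < i then 1 else 0)
        have : F (p.1 + ((n - 1 - p.2 : ℕ) : Fin n)) (n - 2 - p.2) = k - F p.1 p.2 := hflip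
        rw [this]
        split_ifs with h1 h2 h3 <;> omega
    rw [← hbij, ← Finset.sum_add_distrib]
    have hone : ∀ p ∈ Finset.univ ×ˢ Finset.range (n - 1),
        ((if j ≤ F p.1 p.2 then 1 else 0) + (if F p.1 p.2 < j then 1 else 0)) = (1:ℕ) := by
      intro p _
      split_ifs <;> omega
    rw [Finset.sum_congr rfl hone, Finset.sum_const, smul_eq_mul, mul_one,
      Finset.card_product, Finset.card_univ, Fintype.card_fin, Finset.card_range]
  -- assemble
  rw [hsum1]
  have hcast : ∑ m : Fin n, ((((Finset.range (n - 1)).filter (fun c => F m c < i)).card : ℝ)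
      + (((Finset.range (n - 1)).filter (fun c => F m c < j)).card : ℝ))
      = ((n * (n - 1) : ℕ) : ℝ) := by
    rw [← hkey]
    push_cast
    rfl
  rw [hcast]
  have hn1 : (1:ℕ) ≤ n := by omega
  push_cast [Nat.cast_sub hn1]
  field_simp
end
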